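/- Under the Harten setup, let D = {(ρ, m, e) ∈ ℝ × ℝ^d × ℝ : ρ > 0 and (γ−1)(e − ‖m‖²/(2ρ)) > 0} and define Ŝ : D → ℝ by Ŝ(ρ, m, e) = β·ρ·(p·ρ^{−γ})^{1/(α+γ)} with p = (γ−1)(e − ‖m‖²/(2ρ)). Then Ŝ is differentiable on D and its gradient at U = (ρ, m, e) equals W evaluated at the fluid state (ρ, V, p) with V = m/ρ; that is, ∂Ŝ/∂ρ = (ρ/p)(p·ρ^{−γ})^{1/(α+γ)}·(−(α/(γ−1))·(p/ρ) − ‖V‖²/2), ∂Ŝ/∂m_i = (ρ/p)(p·ρ^{−γ})^{1/(α+γ)}·V_i for each i, and ∂Ŝ/∂e = −(ρ/p)(p·ρ^{−γ})^{1/(α+γ)}. -/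

import Mathlib

/-- Harten's entropy function `S = β·ρ·(p·ρ^(−γ))^(1/(α+γ))`. -/
noncomputable def hartenS (γ α β ρ p : ℝ) : ℝ :=
  β * ρ * (p * ρ ^ (-γ)) ^ (1 / (α + γ))

/-- Harten's entropy variables, as a vector of `EuclideanSpace ℝ (Fin (d+2))`. -/
noncomputable def hartenW (d : ℕ) (γ α ρ p : ℝ) (V : Fin d → ℝ) :
    EuclideanSpace ℝ (Fin (d + 2)) :=
  (WithLp.equiv 2 (Fin (d + 2) → ℝ)).symm fun j =>
    (ρ / p) * (p * ρ ^ (-γ)) ^ (1 / (α + γ)) *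
      (Fin.cons (α := fun _ => ℝ) (-(α / (γ - 1)) * (p / ρ) - (∑ i, V i ^ 2) / 2)
        (Fin.snoc V (-1)) j)

/-- The pressure as a function of the conservative variables `U = (ρ, m, e)`:
`p(U) = (γ−1)(e − ‖m‖²/(2ρ))`. -/
noncomputable def pOf (d : ℕ) (γ : ℝ) (U : EuclideanSpace ℝ (Fin (d + 2))) : ℝ :=
  (γ - 1) * (U (Fin.last (d + 1)) -
    (∑ i : Fin d, U (Fin.castSucc (Fin.succ i)) ^ 2) / (2 * U 0))

/-- Harten's entropy function regarded as a function `Ŝ` of the conservative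
variables `U = (ρ, m, e)`. -/
noncomputable def hartenShat (d : ℕ) (γ α β : ℝ)
    (U : EuclideanSpace ℝ (Fin (d + 2))) : ℝ :=
  hartenS γ α β (U 0) (pOf d γ U)

/-- The conservative variables `U = (ρ, m, e) ∈ ℝ^(d+2)` as a point of
`EuclideanSpace ℝ (Fin (d+2))`. -/
noncomputable def consPoint (d : ℕ) (ρ : ℝ) (m : Fin d → ℝ) (e : ℝ) :
    EuclideanSpace ℝ (Fin (d + 2)) :=
  (WithLp.equiv 2 (Fin (d + 2) → ℝ)).symm (Fin.cons (α := fun _ => ℝ) ρ (Fin.snoc m e))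

open Fin InnerProductSpace

set_option maxHeartbeats 2000000 in
/-- Under the Harten setup, `Ŝ` is differentiable on
`D = {(ρ, m, e) : ρ > 0, (γ−1)(e − ‖m‖²/(2ρ)) > 0}` and its gradient at
`U = (ρ, m, e)` equals Harten's entropy variables `W` evaluated at the fluid state
`(ρ, V, p)` with `V = m/ρ` and `p = (γ−1)(e − ‖m‖²/(2ρ))`. -/
theorem hartenShat_hasGradientAt
    (d : ℕ) (hd : 1 ≤ d) (γ α β : ℝ) (hγ : 1 < γ) (hα : 0 < α ∨ α < -γ)
    (hβ : β = -(γ + α) / (γ - 1))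
    (ρ e : ℝ) (m : Fin d → ℝ) (hρ : 0 < ρ)
    (hp : 0 < (γ - 1) * (e - (∑ i, m i ^ 2) / (2 * ρ))) :
    HasGradientAt (hartenShat d γ α β)
      (hartenW d γ α ρ ((γ - 1) * (e - (∑ i, m i ^ 2) / (2 * ρ))) (fun i => m i / ρ))
      (consPoint d ρ m e) := by
  classical
  rw [hasGradientAt_iff_hasFDerivAt]
  set x : EuclideanSpace ℝ (Fin (d+2)) := consPoint d ρ m e with hxdef
  have hx0 : x 0 = ρ := by simp [hxdef, consPoint]
  have hxl : x (Fin.last (d+1)) = e := by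
    simp [hxdef, consPoint, ← Fin.succ_last]
  have hxm : ∀ i : Fin d, x (castSucc i.succ) = m i := by
    intro i
    simp [hxdef, consPoint, ← Fin.succ_castSucc]
  have hρ' : (0:ℝ) < 2 * ρ := by linarith
  have hproj : ∀ j : Fin (d+2), HasFDerivAt (fun U : EuclideanSpace ℝ (Fin (d+2)) => U j)
      (EuclideanSpace.proj (𝕜 := ℝ) j) x :=
    fun j => (EuclideanSpace.proj (𝕜 := ℝ) j).hasFDerivAt
  have hsq : ∀ i : Fin d, HasFDerivAt (fun U : EuclideanSpace ℝ (Fin (d+2)) => U (castSucc i.succ) ^ 2)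
      (((2:ℕ) * x (castSucc i.succ) ^ 1) • EuclideanSpace.proj (𝕜 := ℝ) (castSucc i.succ)) x :=
    fun i => (hasDerivAt_pow 2 _).comp_hasFDerivAt x (hproj _)
  have hQ := HasFDerivAt.fun_sum (u := Finset.univ) (fun i (_ : i ∈ Finset.univ) => hsq i)
  have h2 := (hproj 0).const_mul (2:ℝ)
  have h2x : (fun U : EuclideanSpace ℝ (Fin (d+2)) => 2 * U 0) x ≠ 0 := by
    simpa [hx0] using hρ'.ne'
  have hinv := (hasDerivAt_inv h2x).comp_hasFDerivAt x h2
  have hdiv := hQ.fun_mul hinv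
  have hP := ((hproj (last (d+1))).fun_sub hdiv).const_mul (γ - 1)
  have hx0ne : (fun U : EuclideanSpace ℝ (Fin (d+2)) => U 0) x ≠ 0 := by simpa [hx0] using hρ.ne'
  have hrpow := (hproj 0).rpow_const (p := -γ) (Or.inl hx0ne)
  have hA := hP.fun_mul hrpow
  have hApos : (0:ℝ) < ((γ - 1) * (e - (∑ i, m i ^ 2) / (2 * ρ))) * ρ ^ (-γ) :=
    mul_pos hp (Real.rpow_pos_of_pos hρ _)
  have hAc := hA.rpow_const (p := 1/(α+γ)) (Or.inl (by simp only [Function.comp_apply, hx0, hxl, hxm, ← div_eq_mul_inv]; exact hApos.ne'))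
  have hS := ((hproj 0).const_mul β).fun_mul hAc
  refine HasFDerivAt.congr_of_eventuallyEq (hS.congr_fderiv ?_)
    (Filter.Eventually.of_forall fun U => by
      simp [hartenShat, hartenS, pOf, div_eq_mul_inv, Function.comp])
  -- now the equality of the gradient with the computed derivative
  apply ContinuousLinearMap.ext
  intro w
  simp only [toDual_apply_apply, PiLp.inner_apply, RCLike.inner_apply, starRingEnd_apply, star_trivial,
    hartenW, WithLp.equiv_symm_apply, PiLp.toLp_apply, ContinuousLinearMap.add_apply,
    ContinuousLinearMap.coe_smul', Pi.smul_apply, ContinuousLinearMap.coe_sub',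
    Pi.sub_apply, ContinuousLinearMap.coe_sum', Finset.sum_apply,
    PiLp.proj_apply, smul_eq_mul, Function.comp_apply, hx0, hxl, hxm]
  rw [Fin.sum_univ_succ, Fin.sum_univ_castSucc]
  simp only [Fin.cons_zero, Fin.cons_succ, Fin.snoc_castSucc, Fin.snoc_last]
  simp only [Fin.succ_castSucc, Fin.succ_last, pow_one, Nat.cast_ofNat]
  simp only [div_eq_mul_inv, one_mul, Nat.succ_eq_add_one]
  have hq2 : (∑ x, (m x * ρ⁻¹) ^ 2) = (∑ x, m x ^ 2) * (ρ⁻¹)^2 := by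
    rw [Finset.sum_mul]
    exact Finset.sum_congr rfl fun i _ => by ring
  rw [hq2]
  have hγ1 : γ - 1 ≠ 0 := by linarith
  have hαγ : α + γ ≠ 0 := by
    rcases hα with h | h
    · positivity
    · have : α + γ < 0 := by linarith
      exact this.ne
  have hPpos : (0:ℝ) < (γ - 1) * (e - (∑ x : Fin d, m x ^ 2) * (2 * ρ)⁻¹) := by
    rw [← div_eq_mul_inv]; exact hp
  have hRpos : (0:ℝ) < ρ ^ (-γ) := Real.rpow_pos_of_pos hρ _
  have hbasepos : (0:ℝ) < (γ - 1) * (e - (∑ x : Fin d, m x ^ 2) * (2 * ρ)⁻¹) * ρ ^ (-γ) :=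
    mul_pos hPpos hRpos
  rw [Real.rpow_sub hbasepos, Real.rpow_one, Real.rpow_sub hρ, Real.rpow_one]
  have hTpos : (0:ℝ) <
      ((γ - 1) * (e - (∑ x : Fin d, m x ^ 2) * (2 * ρ)⁻¹) * ρ ^ (-γ)) ^ ((α+γ)⁻¹) :=
    Real.rpow_pos_of_pos hbasepos _
  set q : ℝ := ∑ x : Fin d, m x ^ 2 with hqdef
  set R : ℝ := ρ ^ (-γ) with hRdef
  set P : ℝ := (γ - 1) * (e - q * (2 * ρ)⁻¹) with hPdef
  set T : ℝ := (P * R) ^ ((α+γ)⁻¹) with hTdef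
  set S : ℝ := ∑ x : Fin d, m x * w (x.succ.castSucc) with hSdef
  have hsum1 : (∑ x : Fin d, 2 * m x * w (x.succ.castSucc)) = 2 * S := by
    rw [hSdef, Finset.mul_sum]
    exact Finset.sum_congr rfl fun i _ => by ring
  have hsum2 : (∑ x : Fin d,
      ρ * P⁻¹ * T * (m x * ρ⁻¹) * w (x.succ.castSucc))
      = P⁻¹ * T * S := by
    rw [hSdef, Finset.mul_sum]
    refine Finset.sum_congr rfl fun i _ => ?_
    rw [show ρ * P⁻¹ * T * (m i * ρ⁻¹) * w (i.succ.castSucc)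
        = (ρ⁻¹ * ρ) * (P⁻¹ * T * (m i * w (i.succ.castSucc))) by ring,
      inv_mul_cancel₀ hρ.ne']
    ring
  rw [Finset.sum_congr rfl fun i _ => mul_comm (w (i.succ.castSucc)) (ρ * P⁻¹ * T * (m i * ρ⁻¹))]
  rw [hsum1, hsum2]
  rw [hβ]
  field_simp [hρ.ne', hPpos.ne', hγ1, hαγ, hRpos.ne']
  ring
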